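/- Let A₀, A₁ : ℝ → Mat_{n,m}(ℂ), B₀, B₁ : ℝ → Mat_{m,n}(ℂ) be differentiable and satisfy the system A₀' = (1/2)(A₁B₀A₀ − A₀B₀A₁), A₁' = (1/2)(A₁B₁A₀ − A₀B₁A₁), B₀' = (1/2)(B₁A₀B₀ − B₀A₀B₁), B₁' = (1/2)(B₁A₁B₀ − B₀A₁B₁). Then for every ζ ∈ ℂ, Z(ζ) = (A₀+A₁ζ)(B₀+B₁ζ) satisfies the Lax equation Z' = [Z_#, Z] where Z_# = (1/2)(A₀B₁ + A₁B₀) + A₁B₁ζ. -/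

import Mathlib

open Matrix

attribute [local instance] Matrix.normedAddCommGroup Matrix.normedSpace

noncomputable def mulCLM (n m : ℕ) :
    Matrix (Fin n) (Fin m) ℂ →L[ℝ] Matrix (Fin m) (Fin n) ℂ →L[ℝ] Matrix (Fin n) (Fin n) ℂ :=
  LinearMap.toContinuousLinearMap
    { toFun := fun A => LinearMap.toContinuousLinearMap
        { toFun := fun B => A * B
          map_add' := fun x y => Matrix.mul_add A x y
          map_smul' := fun c x => (Matrix.mul_smul A c x) }
      map_add' := by intro x y; ext B : 1; simp [Matrix.add_mul]
      map_smul' := by intro c x; ext B : 1; simp [Matrix.smul_mul] }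

theorem hasDerivAt_matmul {n m : ℕ} {A : ℝ → Matrix (Fin n) (Fin m) ℂ}
    {B : ℝ → Matrix (Fin m) (Fin n) ℂ}
    {A' : Matrix (Fin n) (Fin m) ℂ} {B' : Matrix (Fin m) (Fin n) ℂ} {t : ℝ}
    (hA : HasDerivAt A A' t) (hB : HasDerivAt B B' t) :
    HasDerivAt (fun s => A s * B s) (A' * B t + A t * B') t := by
  have := (mulCLM n m).hasDerivAt_of_bilinear (fun _ => hA) (fun _ => hB)
  simp only [mulCLM, LinearMap.coe_toContinuousLinearMap', LinearMap.coe_mk, AddHom.coe_mk, add_comm] at this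
  exact this

/-- Solutions of the system (2nd) give, for each spectral parameter `ζ`, a Lax
equation `Z' = [Z_#, Z]` for `Z(ζ) = (A₀+A₁ζ)(B₀+B₁ζ)`. -/
theorem system2nd_implies_lax_Z (n m : ℕ)
    (A₀ A₁ : ℝ → Matrix (Fin n) (Fin m) ℂ) (B₀ B₁ : ℝ → Matrix (Fin m) (Fin n) ℂ)
    (hA₀ : ∀ t, HasDerivAt A₀ ((1 / 2 : ℂ) •
      (A₁ t * B₀ t * A₀ t - A₀ t * B₀ t * A₁ t)) t)
    (hA₁ : ∀ t, HasDerivAt A₁ ((1 / 2 : ℂ) •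
      (A₁ t * B₁ t * A₀ t - A₀ t * B₁ t * A₁ t)) t)
    (hB₀ : ∀ t, HasDerivAt B₀ ((1 / 2 : ℂ) •
      (B₁ t * A₀ t * B₀ t - B₀ t * A₀ t * B₁ t)) t)
    (hB₁ : ∀ t, HasDerivAt B₁ ((1 / 2 : ℂ) •
      (B₁ t * A₁ t * B₀ t - B₀ t * A₁ t * B₁ t)) t) :
    ∀ (ζ : ℂ) (t : ℝ), HasDerivAt
      (fun s => (A₀ s + ζ • A₁ s) * (B₀ s + ζ • B₁ s))
      (((1 / 2 : ℂ) • (A₀ t * B₁ t + A₁ t * B₀ t) + ζ • (A₁ t * B₁ t)) *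
          ((A₀ t + ζ • A₁ t) * (B₀ t + ζ • B₁ t))
        - ((A₀ t + ζ • A₁ t) * (B₀ t + ζ • B₁ t)) *
          ((1 / 2 : ℂ) • (A₀ t * B₁ t + A₁ t * B₀ t) + ζ • (A₁ t * B₁ t))) t := by
  intro ζ t
  have hA : HasDerivAt (fun s => A₀ s + ζ • A₁ s)
      ((1 / 2 : ℂ) • (A₁ t * B₀ t * A₀ t - A₀ t * B₀ t * A₁ t)
        + ζ • ((1 / 2 : ℂ) • (A₁ t * B₁ t * A₀ t - A₀ t * B₁ t * A₁ t))) t :=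
    (hA₀ t).add ((hA₁ t).const_smul ζ)
  have hB : HasDerivAt (fun s => B₀ s + ζ • B₁ s)
      ((1 / 2 : ℂ) • (B₁ t * A₀ t * B₀ t - B₀ t * A₀ t * B₁ t)
        + ζ • ((1 / 2 : ℂ) • (B₁ t * A₁ t * B₀ t - B₀ t * A₁ t * B₁ t))) t :=
    (hB₀ t).add ((hB₁ t).const_smul ζ)
  have key := hasDerivAt_matmul hA hB
  convert key using 1
  simp only [Matrix.add_mul, Matrix.mul_add, Matrix.sub_mul, Matrix.mul_sub, Matrix.smul_mul,
    Matrix.mul_smul, smul_add, smul_sub, smul_smul, Matrix.mul_assoc]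
  module
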